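/- Let G be a connected graph, V_i = {v_1, …, v_ℓ} (ℓ ≥ 2) a neighborhood class of G (all vertices pairwise of the same type), and H = G[V(G)\{v_ℓ}]. Then for every k ≥ 2, G is k-copwin if and only if H is k-copwin. -/

import Mathlib

open SimpleGraph

variable {V : Type*}

/-- A (positional) strategy for `k` cops on the graph `G`: an initial placement and a
move function; each cop may stay or move to an adjacent vertex. -/
structure CopStrat (G : SimpleGraph V) (k : ℕ) where
  init : Fin k → V
  move : (Fin k → V) → V → Fin k → V
  valid : ∀ c r i, move c r i = c i ∨ G.Adj (c i) (move c r i)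

/-- A strategy for the robber: an initial placement (knowing the cops' placement) and a
move function; the robber may stay or move to an adjacent vertex. -/
structure RobStrat (G : SimpleGraph V) (k : ℕ) where
  init : (Fin k → V) → V
  move : (Fin k → V) → V → V
  valid : ∀ c r, move c r = r ∨ G.Adj r (move c r)

/-- The play determined by initial placements and move functions: position of the cops and
of the robber after `n` full rounds (cops move first in each round). -/
def gplay {k : ℕ} (ci : Fin k → V) (cm : (Fin k → V) → V → Fin k → V)
    (ri : (Fin k → V) → V) (rm : (Fin k → V) → V → V) : ℕ → (Fin k → V) × V
  | 0 => (ci, ri ci)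
  | n + 1 =>
    let p := gplay ci cm ri rm n
    let c' := cm p.1 p.2
    (c', rm c' p.2)

/-- The robber is caught: at some moment (either on a cops' move, or because the
positions already coincide) a cop occupies the robber's vertex. -/
def gCaught {k : ℕ} (ci : Fin k → V) (cm : (Fin k → V) → V → Fin k → V)
    (ri : (Fin k → V) → V) (rm : (Fin k → V) → V → V) : Prop :=
  ∃ n, ∃ i,
    (gplay ci cm ri rm n).1 i = (gplay ci cm ri rm n).2 ∨
      cm (gplay ci cm ri rm n).1 (gplay ci cm ri rm n).2 i = (gplay ci cm ri rm n).2

/-- `k` cops have a winning strategy on `G`. -/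
def CopsWin (G : SimpleGraph V) (k : ℕ) : Prop :=
  ∃ CS : CopStrat G k, ∀ RS : RobStrat G k,
    gCaught CS.init CS.move RS.init RS.move

/-- The cop number of `G`. -/
noncomputable def copNumber (G : SimpleGraph V) : ℕ := sInf {k | CopsWin G k}


/-- Two vertices have the same type: `N(u) \ {v} = N(v) \ {u}`. -/
def SameType {V : Type*} (G : SimpleGraph V) (u v : V) : Prop :=
  G.neighborSet u \ {v} = G.neighborSet v \ {u}

attribute [local instance] Classical.propDecidable

namespace CopAux

variable {W : Type*}

/-- Cops (about to move) can force a capture within `n` further cop moves,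
starting from cop configuration `c` and robber at `r`. -/
def CanCatch (Γ : SimpleGraph W) (k : ℕ) : ℕ → (Fin k → W) → W → Prop
  | 0, c, r => ∃ i, c i = r
  | n+1, c, r => (∃ i, c i = r) ∨
      ∃ c', (∀ i, c' i = c i ∨ Γ.Adj (c i) (c' i)) ∧
        ((∃ i, c' i = r) ∨ ∀ r', (r' = r ∨ Γ.Adj r r') → CanCatch Γ k n c' r')

theorem canCatch_succ {Γ : SimpleGraph W} {k n} {c : Fin k → W} {r : W} :
    CanCatch Γ k (n+1) c r ↔ (∃ i, c i = r) ∨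
      ∃ c', (∀ i, c' i = c i ∨ Γ.Adj (c i) (c' i)) ∧
        ((∃ i, c' i = r) ∨ ∀ r', (r' = r ∨ Γ.Adj r r') → CanCatch Γ k n c' r') := Iff.rfl

theorem canCatch_mono {Γ : SimpleGraph W} {k : ℕ} :
    ∀ {n} {c : Fin k → W} {r : W}, CanCatch Γ k n c r → CanCatch Γ k (n+1) c r := by
  intro n
  induction n with
  | zero => intro c r h; exact Or.inl h
  | succ n ih =>
    rintro c r (h | ⟨c', hv, h | h⟩)
    · exact Or.inl h
    · exact Or.inr ⟨c', hv, Or.inl h⟩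
    · exact Or.inr ⟨c', hv, Or.inr fun r' hr' => ih (h r' hr')⟩

theorem canCatch_le {Γ : SimpleGraph W} {k m n : ℕ} {c : Fin k → W} {r : W}
    (hmn : m ≤ n) (h : CanCatch Γ k m c r) : CanCatch Γ k n c r := by
  induction hmn with
  | refl => exact h
  | step _ ih => exact canCatch_mono ih

theorem canCatch_uniform [Finite W] {Γ : SimpleGraph W} {k : ℕ} (P : W → Prop)
    (c : Fin k → W) (h : ∀ r, P r → ∃ n, CanCatch Γ k n c r) :
    ∃ N, ∀ r, P r → CanCatch Γ k N c r := by
  have : Fintype W := Fintype.ofFinite W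
  refine ⟨Finset.univ.sup (fun r => if hp : P r then Nat.find (h r hp) else 0), fun r hp => ?_⟩
  have := Nat.find_spec (h r hp)
  refine canCatch_le ?_ this
  have heq : (if hp' : P r then Nat.find (h r hp') else 0) = Nat.find (h r hp) := dif_pos hp
  have hle := Finset.le_sup (f := fun r => if hp' : P r then Nat.find (h r hp') else 0)
    (Finset.mem_univ r)
  simpa [heq] using hle


theorem beats_trajectory {Γ : SimpleGraph W} {k : ℕ} (CS : CopStrat Γ k)
    (hwin : ∀ RS : RobStrat Γ k, gCaught CS.init CS.move RS.init RS.move)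
    (cs : ℕ → Fin k → W) (rob : ℕ → W)
    (h0 : cs 0 = CS.init)
    (hc : ∀ n, cs (n+1) = CS.move (cs n) (rob n))
    (hr : ∀ n, rob (n+1) = rob n ∨ Γ.Adj (rob n) (rob (n+1))) :
    ∃ n i, cs n i = rob n ∨ CS.move (cs n) (rob n) i = rob n := by
  by_contra hno
  push_neg at hno
  let RS : RobStrat Γ k := {
    init := fun _ => rob 0
    move := fun c' x =>
      if h : ∃ m, cs (m+1) = c' ∧ rob m = x then rob (Nat.find h + 1) else x
    valid := by
      intro c' x
      by_cases h : ∃ m, cs (m+1) = c' ∧ rob m = x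
      · simp only [dif_pos h]
        have hf := (Nat.find_spec h).2
        rcases hr (Nat.find h) with h1 | h1
        · left; rw [h1]; exact hf
        · right; rw [hf] at h1; exact h1
      · simp [dif_neg h] }
  have hRSi : ∀ c, RS.init c = rob 0 := fun _ => rfl
  have hRSm : ∀ c' x, RS.move c' x =
      if h : ∃ m, cs (m+1) = c' ∧ rob m = x then rob (Nat.find h + 1) else x :=
    fun _ _ => rfl
  have key : ∀ n, ∃ m, gplay CS.init CS.move RS.init RS.move n = (cs m, rob m) := by
    intro n
    induction n with
    | zero =>
      refine ⟨0, ?_⟩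
      show (CS.init, RS.init CS.init) = _
      rw [hRSi, h0]
    | succ n ih =>
      obtain ⟨m, hm⟩ := ih
      have hstep : gplay CS.init CS.move RS.init RS.move (n+1)
          = (CS.move (cs m) (rob m), RS.move (CS.move (cs m) (rob m)) (rob m)) := by
        show (CS.move _ _, RS.move _ _) = _
        rw [hm]
      have hcm : CS.move (cs m) (rob m) = cs (m+1) := (hc m).symm
      have hex : ∃ m', cs (m'+1) = cs (m+1) ∧ rob m' = rob m := ⟨m, rfl, rfl⟩
      obtain ⟨he1, he2⟩ := Nat.find_spec hex
      refine ⟨Nat.find hex + 1, ?_⟩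
      rw [hstep, hcm, hRSm, dif_pos hex, he1]
  obtain ⟨n, i, hcatch⟩ := hwin RS
  obtain ⟨m, hm⟩ := key n
  rw [hm] at hcatch
  simp only at hcatch
  rcases hcatch with h | h
  · exact (hno m i).1 h
  · exact (hno m i).2 h

theorem exists_goodmove {Γ : SimpleGraph W} {k : ℕ} {c : Fin k → W} {r : W}
    (h0 : ¬∃ i, c i = r) (h : ∃ n, CanCatch Γ k n c r) :
    ∃ c', (∀ i, c' i = c i ∨ Γ.Adj (c i) (c' i)) ∧
      ((∃ i, c' i = r) ∨
        ∀ r', (r' = r ∨ Γ.Adj r r') → CanCatch Γ k (Nat.find h - 1) c' r') := by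
  have hspec := Nat.find_spec h
  rcases hn : Nat.find h with _ | m
  · rw [hn] at hspec; exact absurd hspec h0
  · rw [hn] at hspec
    rcases hspec with h1 | ⟨c', hv, hrest⟩
    · exact absurd h1 h0
    · exact ⟨c', hv, by simpa using hrest⟩

noncomputable def extractStrat (Γ : SimpleGraph W) (k : ℕ) (ci : Fin k → W) :
    CopStrat Γ k where
  init := ci
  move := fun c r =>
    if h : (¬∃ i, c i = r) ∧ ∃ n, CanCatch Γ k n c r then
      Classical.choose (exists_goodmove h.1 h.2)
    else c
  valid := by
    intro c r i
    by_cases h : (¬∃ i, c i = r) ∧ ∃ n, CanCatch Γ k n c r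
    · simp only [dif_pos h]; exact (Classical.choose_spec (exists_goodmove h.1 h.2)).1 i
    · simp only [dif_neg h]; exact Or.inl trivial

theorem copsWin_of_canCatch [Finite W] {Γ : SimpleGraph W} {k : ℕ} (ci : Fin k → W)
    (hall : ∀ r, ∃ n, CanCatch Γ k n ci r) : CopsWin Γ k := by
  refine ⟨extractStrat Γ k ci, fun RS => ?_⟩
  set CS := extractStrat Γ k ci with hCS
  by_contra hnc
  rw [gCaught] at hnc
  push_neg at hnc
  set p := gplay CS.init CS.move RS.init RS.move with hp
  have hmoveEq : ∀ n (hA : ¬∃ i, (p n).1 i = (p n).2)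
      (hEx : ∃ n', CanCatch Γ k n' (p n).1 (p n).2),
      CS.move (p n).1 (p n).2 = Classical.choose (exists_goodmove hA hEx) := by
    intro n hA hEx
    show (if h : (¬∃ i, (p n).1 i = (p n).2) ∧ ∃ n', CanCatch Γ k n' (p n).1 (p n).2 then
      Classical.choose (exists_goodmove h.1 h.2) else (p n).1) = _
    rw [dif_pos ⟨hA, hEx⟩]
  have step : ∀ n m, CanCatch Γ k m (p n).1 (p n).2 →
      ∃ m' < m, CanCatch Γ k m' (p (n+1)).1 (p (n+1)).2 := by
    intro n m hm
    have hA : ¬∃ i, (p n).1 i = (p n).2 := by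
      rintro ⟨i, hi⟩; exact (hnc n i).1 hi
    have hEx : ∃ n', CanCatch Γ k n' (p n).1 (p n).2 := ⟨m, hm⟩
    have hmv := hmoveEq n hA hEx
    obtain ⟨hvld, hrest⟩ := Classical.choose_spec (exists_goodmove hA hEx)
    rcases hrest with ⟨i, hi⟩ | hrest
    · exact absurd (hmv ▸ hi : CS.move (p n).1 (p n).2 i = (p n).2)
        ((hnc n i).2)
    · have hfind0 : Nat.find hEx ≠ 0 := by
        intro h0
        have := Nat.find_spec hEx
        rw [h0] at this
        exact hA this
      have hple : Nat.find hEx ≤ m := Nat.find_min' hEx hm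
      refine ⟨Nat.find hEx - 1, by omega, ?_⟩
      have hp1 : (p (n+1)).1 = CS.move (p n).1 (p n).2 := rfl
      have hp2 : (p (n+1)).2 = RS.move (CS.move (p n).1 (p n).2) (p n).2 := rfl
      rw [hp1, hp2, hmv]
      exact hrest _ (RS.valid _ _)
  have h00 : p 0 = (ci, RS.init ci) := rfl
  obtain ⟨m0, hm0⟩ := hall (RS.init ci)
  have desc : ∀ n, ∃ m, CanCatch Γ k m (p n).1 (p n).2 ∧ m + n ≤ m0 := by
    intro n
    induction n with
    | zero => exact ⟨m0, by rw [h00]; exact hm0, by omega⟩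
    | succ n ih =>
      obtain ⟨m, hm, hle⟩ := ih
      obtain ⟨m', hm', hcc⟩ := step n m hm
      exact ⟨m', hcc, by omega⟩
  obtain ⟨m, -, hle⟩ := desc (m0 + 1)
  omega

theorem canCatch_of_copsWin [Finite W] {Γ : SimpleGraph W} {k : ℕ} (h : CopsWin Γ k) :
    ∃ ci, ∀ r, ∃ n, CanCatch Γ k n ci r := by
  obtain ⟨CS, hwin⟩ := h
  refine ⟨CS.init, fun r0 => ?_⟩
  by_contra hno
  push_neg at hno
  have stepE : ∀ c r, (∀ n, ¬CanCatch Γ k n c r) →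
      (∀ i, c i ≠ r) ∧ (∀ i, CS.move c r i ≠ r) ∧
      ∃ r', (r' = r ∨ Γ.Adj r r') ∧ ∀ n, ¬CanCatch Γ k n (CS.move c r) r' := by
    intro c r hInv
    have h0 : ∀ i, c i ≠ r := fun i hi => hInv 0 ⟨i, hi⟩
    have hkey : ∀ n, (∀ i, CS.move c r i ≠ r) ∧
        ∃ r', (r' = r ∨ Γ.Adj r r') ∧ ¬CanCatch Γ k n (CS.move c r) r' := by
      intro n
      have hn := hInv (n+1)
      rw [canCatch_succ] at hn
      push_neg at hn
      obtain ⟨-, h2⟩ := hn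
      have h3 := h2 (CS.move c r) (CS.valid c r)
      exact h3
    refine ⟨h0, (hkey 0).1, ?_⟩
    by_contra hcon
    push_neg at hcon
    obtain ⟨N, hN⟩ := canCatch_uniform (fun r' => r' = r ∨ Γ.Adj r r') (CS.move c r)
      (fun r' hr' => hcon r' hr')
    obtain ⟨-, r', hval, hnc⟩ := hkey N
    exact hnc (hN r' hval)
  let nextR : (Fin k → W) → W → W := fun c r =>
    if h : ∀ n, ¬CanCatch Γ k n c r then Classical.choose (stepE c r h).2.2 else r
  let esc : ℕ → (Fin k → W) × W := fun n =>
    Nat.rec (CS.init, r0) (fun _ q => (CS.move q.1 q.2, nextR q.1 q.2)) n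
  have hesc0 : esc 0 = (CS.init, r0) := rfl
  have hescS : ∀ n, esc (n+1) = (CS.move (esc n).1 (esc n).2, nextR (esc n).1 (esc n).2) :=
    fun n => rfl
  have hInvAll : ∀ n, ∀ m, ¬CanCatch Γ k m (esc n).1 (esc n).2 := by
    intro n
    induction n with
    | zero => exact hno
    | succ n ih =>
      rw [hescS n]
      have hd : nextR (esc n).1 (esc n).2 = Classical.choose (stepE _ _ ih).2.2 := dif_pos ih
      rw [hd]
      exact (Classical.choose_spec (stepE _ _ ih).2.2).2
  have hrval : ∀ n, (esc (n+1)).2 = (esc n).2 ∨ Γ.Adj (esc n).2 (esc (n+1)).2 := by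
    intro n
    rw [hescS n]
    have ih := hInvAll n
    have hd : nextR (esc n).1 (esc n).2 = Classical.choose (stepE _ _ ih).2.2 := dif_pos ih
    simp only [hd]
    exact (Classical.choose_spec (stepE _ _ ih).2.2).1
  obtain ⟨n, i, hcatch⟩ := beats_trajectory CS hwin (fun n => (esc n).1) (fun n => (esc n).2)
    rfl (fun n => congrArg Prod.fst (hescS n)) hrval
  obtain ⟨hA, hB, -⟩ := stepE (esc n).1 (esc n).2 (hInvAll n)
  rcases hcatch with h | h
  · exact hA i h
  · exact hB i h


section Graphs

variable {V : Type*} (G : SimpleGraph V) (vl w : V)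

/-- The retraction-like map sending `vl` to `w` and fixing everything else. -/
noncomputable def proj (hw : w ≠ vl) : V → ↥({vl}ᶜ : Set V) := fun x =>
  if h : x = vl then ⟨w, by simp [hw]⟩ else ⟨x, h⟩

variable {G vl w}

theorem proj_coe_vl (hw : w ≠ vl) : ((proj vl w hw vl : ↥({vl}ᶜ : Set V)) : V) = w := by
  rw [proj, dif_pos rfl]

theorem proj_coe_of_ne (hw : w ≠ vl) {x : V} (hx : x ≠ vl) :
    ((proj vl w hw x : ↥({vl}ᶜ : Set V)) : V) = x := by
  rw [proj, dif_neg hx]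

theorem proj_coe (hw : w ≠ vl) (a : ↥({vl}ᶜ : Set V)) : proj vl w hw (↑a) = a :=
  Subtype.ext (proj_coe_of_ne hw a.2)

theorem projeq (hw : w ≠ vl) {r : V} {ρ : ↥({vl}ᶜ : Set V)} (h : proj vl w hw r = ρ) :
    r = ↑ρ ∨ (r = vl ∧ (ρ : V) = w) := by
  by_cases hr : r = vl
  · refine Or.inr ⟨hr, ?_⟩
    rw [← h, hr, proj_coe_vl hw]
  · refine Or.inl ?_
    rw [← h, proj_coe_of_ne hw hr]

theorem induce_adj_iff {s : Set V} {a b : ↥s} : (G.induce s).Adj a b ↔ G.Adj ↑a ↑b := Iff.rfl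

variable (hw : w ≠ vl)
  (hK1 : ∀ x, x ≠ w → G.Adj vl x → G.Adj w x)
  (hK2 : ∀ x, x ≠ vl → G.Adj w x → G.Adj vl x)

include hw hK1 in
/-- weak homomorphism property of `proj` on lazy moves. -/
theorem proj_lazy {x y : V} (hxy : y = x ∨ G.Adj x y) :
    proj vl w hw y = proj vl w hw x ∨
      (G.induce ({vl}ᶜ : Set V)).Adj (proj vl w hw x) (proj vl w hw y) := by
  rcases hxy with rfl | hadj
  · exact Or.inl rfl
  by_cases hx : x = vl
  · have hadj' : G.Adj vl y := hx ▸ hadj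
    have hy : y ≠ vl := fun h => G.loopless.irrefl vl (h ▸ hadj')
    by_cases hyw : y = w
    · left
      apply Subtype.ext
      rw [proj_coe_of_ne hw hy, hx, proj_coe_vl hw, hyw]
    · right
      rw [induce_adj_iff, hx, proj_coe_vl hw, proj_coe_of_ne hw hy]
      exact hK1 y hyw hadj'
  · by_cases hy : y = vl
    · have hadj' : G.Adj vl x := hy ▸ hadj.symm
      by_cases hxw : x = w
      · left
        apply Subtype.ext
        rw [hy, proj_coe_vl hw, proj_coe_of_ne hw hx, hxw]
      · right
        rw [induce_adj_iff, hy, proj_coe_vl hw, proj_coe_of_ne hw hx]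
        exact (hK1 x hxw hadj').symm
    · right
      rw [induce_adj_iff, proj_coe_of_ne hw hx, proj_coe_of_ne hw hy]
      exact hadj

include hw hK2 in
/-- lifting lazy moves of the quotient back to `G`. -/
theorem proj_lift {r : V} {ρ' : ↥({vl}ᶜ : Set V)}
    (h : ρ' = proj vl w hw r ∨ (G.induce ({vl}ᶜ : Set V)).Adj (proj vl w hw r) ρ') :
    ∃ r', (r' = r ∨ G.Adj r r') ∧ proj vl w hw r' = ρ' := by
  rcases h with rfl | hadj
  · exact ⟨r, Or.inl rfl, rfl⟩
  rw [induce_adj_iff] at hadj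
  by_cases hr : r = vl
  · rw [hr, proj_coe_vl hw] at hadj
    have hne : (ρ' : V) ≠ vl := ρ'.2
    refine ⟨↑ρ', Or.inr ?_, proj_coe hw ρ'⟩
    rw [hr]
    exact hK2 _ hne hadj
  · rw [proj_coe_of_ne hw hr] at hadj
    exact ⟨↑ρ', Or.inr hadj, proj_coe hw ρ'⟩

variable (hG : G.Connected) {k : ℕ}

include hw hK1 hG in
theorem guardAux [Fintype V] {i j : Fin k} (hij : i ≠ j) :
    ∀ (d : ℕ) (c : Fin k → V) (x : V), G.dist x vl ≤ d → c i = w → c j = x →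
      ∃ m, CanCatch G k m c vl := by
  intro d
  induction d with
  | zero =>
    intro c x hdist hci hcj
    have hx : x = vl := (hG.dist_eq_zero_iff).mp (Nat.le_zero.mp hdist)
    exact ⟨0, j, by rw [hcj, hx]⟩
  | succ d ih =>
    intro c x hdist hci hcj
    by_cases hd : G.dist x vl ≤ d
    · exact ih c x hd hci hcj
    by_cases hx : x = vl
    · exact ⟨0, j, by rw [hcj, hx]⟩
    have hdist' : G.dist x vl = d + 1 := le_antisymm hdist (by omega)
    obtain ⟨p, hp⟩ := hG.exists_walk_length_eq_dist x vl
    have hpn : ¬p.Nil := SimpleGraph.Walk.not_nil_of_ne hx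
    obtain ⟨y, hxy, q, rfl⟩ := (SimpleGraph.Walk.not_nil_iff).mp hpn
    rw [SimpleGraph.Walk.length_cons, hdist'] at hp
    have hqd : G.dist y vl ≤ d := by
      have := SimpleGraph.dist_le q
      omega
    set c' : Fin k → V := Function.update c j y with hc'
    have hc'i : c' i = w := by rw [hc', Function.update_of_ne hij, hci]
    have hc'j : c' j = y := by rw [hc', Function.update_self]
    have hvalid : ∀ i', c' i' = c i' ∨ G.Adj (c i') (c' i') := by
      intro i'
      by_cases h : i' = j
      · subst h; right; rw [hc'j, hcj]; exact hxy
      · left; rw [hc', Function.update_of_ne h]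
    have hnext : ∀ r', (r' = vl ∨ G.Adj vl r') → ∃ m, CanCatch G k m c' r' := by
      intro r' hr'
      rcases hr' with rfl | hadj
      · exact ih c' y hqd hc'i hc'j
      · by_cases hrw : r' = w
        · exact ⟨0, i, by rw [hc'i, hrw]⟩
        · have hadj' : G.Adj w r' := hK1 r' hrw hadj
          refine ⟨1, Or.inr ⟨Function.update c' i r', ?_,
            Or.inl ⟨i, by rw [Function.update_self]⟩⟩⟩
          intro i'
          by_cases h : i' = i
          · subst h; right; rw [Function.update_self, hc'i]; exact hadj'
          · left; rw [Function.update_of_ne h]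
    obtain ⟨N, hN⟩ := canCatch_uniform (fun r' => r' = vl ∨ G.Adj vl r') c' hnext
    exact ⟨N+1, Or.inr ⟨c', hvalid, Or.inr fun r' h => hN r' h⟩⟩

include hw hK1 hG in
theorem guardLemma [Fintype V] (hk : 2 ≤ k) (c : Fin k → V) (i : Fin k) (hci : c i = w) :
    ∃ m, CanCatch G k m c vl := by
  have : Nontrivial (Fin k) := Fin.nontrivial_iff_two_le.mpr hk
  obtain ⟨j, hj⟩ := exists_ne i
  exact guardAux hw hK1 hG (Ne.symm hj) (G.dist (c j) vl) c (c j) le_rfl hci rfl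

include hw hK1 hG in
theorem afterVl [Fintype V] (hk : 2 ≤ k) (c' : Fin k → V) (i : Fin k) (hci : c' i = w) :
    ∀ r', (r' = vl ∨ G.Adj vl r') → ∃ m, CanCatch G k m c' r' := by
  intro r' hr'
  rcases hr' with rfl | hadj
  · exact guardLemma hw hK1 hG hk c' i hci
  · by_cases hrw : r' = w
    · exact ⟨0, i, by rw [hci, hrw]⟩
    · have hadj' := hK1 r' hrw hadj
      refine ⟨1, Or.inr ⟨Function.update c' i r', ?_,
        Or.inl ⟨i, by rw [Function.update_self]⟩⟩⟩
      intro i'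
      by_cases h : i' = i
      · subst h; right; rw [Function.update_self, hci]; exact hadj'
      · left; rw [Function.update_of_ne h]

include hw hK1 hG in
theorem catch_HtoG [Fintype V] (hk : 2 ≤ k) :
    ∀ (n : ℕ) (d : Fin k → ↥({vl}ᶜ : Set V)) (ρ : ↥({vl}ᶜ : Set V)),
      CanCatch (G.induce ({vl}ᶜ : Set V)) k n d ρ →
      ∀ r, proj vl w hw r = ρ → ∃ m, CanCatch G k m (fun i' => ↑(d i')) r := by
  intro n
  induction n with
  | zero =>
    rintro d ρ ⟨i, hi⟩ r hρ
    rcases projeq hw hρ with hr | ⟨hr, hρw⟩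
    · exact ⟨0, i, by show ((d i : V)) = r; rw [hr, ← hi]⟩
    · have hdi : (↑(d i) : V) = w := by rw [hi, hρw]
      rw [hr]
      exact guardLemma hw hK1 hG hk _ i hdi
  | succ n ih =>
    rintro d ρ hcc r hρ
    rcases hcc with ⟨i, hi⟩ | ⟨d', hv, hrest⟩
    · rcases projeq hw hρ with hr | ⟨hr, hρw⟩
      · exact ⟨0, i, by show ((d i : V)) = r; rw [hr, ← hi]⟩
      · have hdi : (↑(d i) : V) = w := by rw [hi, hρw]
        rw [hr]
        exact guardLemma hw hK1 hG hk _ i hdi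
    · have hvalid : ∀ i', (↑(d' i') : V) = ↑(d i') ∨ G.Adj ↑(d i') ↑(d' i') := by
        intro i'
        rcases hv i' with h | h
        · exact Or.inl (congrArg _ h)
        · exact Or.inr h
      rcases hrest with ⟨i, hi⟩ | hall
      · rcases projeq hw hρ with hr | ⟨hr, hρw⟩
        · exact ⟨1, Or.inr ⟨fun i' => ↑(d' i'), hvalid,
            Or.inl ⟨i, by show ((d' i : V)) = r; rw [hr, ← hi]⟩⟩⟩
        · have hci : ((d' i : V)) = w := by rw [hi, hρw]
          rw [hr]
          obtain ⟨N, hN⟩ := canCatch_uniform (fun r' => r' = vl ∨ G.Adj vl r')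
            (fun i' => ↑(d' i'))
            (afterVl hw hK1 hG hk (fun i' => ↑(d' i')) i hci)
          exact ⟨N+1, Or.inr ⟨fun i' => ↑(d' i'), hvalid, Or.inr fun r' h => hN r' h⟩⟩
      · have hnext : ∀ r', (r' = r ∨ G.Adj r r') → ∃ m, CanCatch G k m (fun i' => ↑(d' i')) r' := by
          intro r' hr'
          have hlz := proj_lazy hw hK1 hr'
          rw [hρ] at hlz
          exact ih d' (proj vl w hw r') (hall _ hlz) r' rfl
        obtain ⟨N, hN⟩ := canCatch_uniform (fun r' => r' = r ∨ G.Adj r r') _ hnext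
        exact ⟨N+1, Or.inr ⟨fun i' => ↑(d' i'), hvalid, Or.inr fun r' h => hN r' h⟩⟩

include hw hK1 hK2 in
theorem catch_GtoH [Finite V] :
    ∀ (n : ℕ) (c : Fin k → V) (r : V), CanCatch G k n c r →
      ∃ m, CanCatch (G.induce ({vl}ᶜ : Set V)) k m
        (fun i' => proj vl w hw (c i')) (proj vl w hw r) := by
  intro n
  induction n with
  | zero =>
    rintro c r ⟨i, hi⟩
    exact ⟨0, i, congrArg _ hi⟩
  | succ n ih =>
    rintro c r (⟨i, hi⟩ | ⟨c', hv, hrest⟩)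
    · exact ⟨0, i, congrArg _ hi⟩
    have hvalid : ∀ i', proj vl w hw (c' i') = proj vl w hw (c i') ∨
        (G.induce ({vl}ᶜ : Set V)).Adj (proj vl w hw (c i')) (proj vl w hw (c' i')) :=
      fun i' => proj_lazy hw hK1 (hv i')
    rcases hrest with ⟨i, hi⟩ | hall
    · exact ⟨1, Or.inr ⟨_, hvalid, Or.inl ⟨i, congrArg _ hi⟩⟩⟩
    · have hnext : ∀ ρ', (ρ' = proj vl w hw r ∨
          (G.induce ({vl}ᶜ : Set V)).Adj (proj vl w hw r) ρ') →
          ∃ m, CanCatch (G.induce ({vl}ᶜ : Set V)) k m (fun i' => proj vl w hw (c' i')) ρ' := by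
        intro ρ' hρ'
        obtain ⟨r', hr', hpr⟩ := proj_lift hw hK2 hρ'
        rw [← hpr]
        exact ih c' r' (hall r' hr')
      obtain ⟨N, hN⟩ := canCatch_uniform _ _ hnext
      exact ⟨N+1, Or.inr ⟨_, hvalid, Or.inr fun ρ' h => hN ρ' h⟩⟩

end Graphs

end CopAux

/-- If `S` is a neighbourhood class of `G` (all vertices pairwise of the same type) with
at least 2 vertices and `vl ∈ S`, then for every `k ≥ 2`, `G` is `k`-copwin iff
`G[V(G) \ {vl}]` is `k`-copwin. -/
theorem copsWin_iff_copsWin_delete_class_vertex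
    {V : Type*} [Fintype V] (G : SimpleGraph V) (hG : G.Connected)
    (S : Finset V) (hS2 : 2 ≤ S.card)
    (hS : ∀ u ∈ S, ∀ v ∈ S, SameType G u v)
    (vl : V) (hvl : vl ∈ S) (k : ℕ) (hk : 2 ≤ k) :
    CopsWin G k ↔ CopsWin (G.induce ({vl}ᶜ : Set V)) k := by
  have h1 : 1 < S.card := by omega
  obtain ⟨w, hwS, hw⟩ := Finset.exists_mem_ne h1 vl
  have hst : G.neighborSet w \ {vl} = G.neighborSet vl \ {w} := hS w hwS vl hvl
  have hmem : ∀ x, (x ∈ G.neighborSet w \ {vl}) ↔ (x ∈ G.neighborSet vl \ {w}) :=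
    fun x => by rw [hst]
  have hK1 : ∀ x, x ≠ w → G.Adj vl x → G.Adj w x := by
    intro x hxw hadj
    have hx : x ∈ G.neighborSet vl \ {w} := ⟨hadj, by simpa using hxw⟩
    exact ((hmem x).mpr hx).1
  have hK2 : ∀ x, x ≠ vl → G.Adj w x → G.Adj vl x := by
    intro x hxv hadj
    have hx : x ∈ G.neighborSet w \ {vl} := ⟨hadj, by simpa using hxv⟩
    exact ((hmem x).mp hx).1
  constructor
  · intro hgw
    obtain ⟨ci, hci⟩ := CopAux.canCatch_of_copsWin hgw
    apply CopAux.copsWin_of_canCatch (fun i => CopAux.proj vl w hw (ci i))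
    intro ρ
    obtain ⟨n, hn⟩ := hci ↑ρ
    obtain ⟨m, hm⟩ := CopAux.catch_GtoH hw hK1 hK2 n ci ↑ρ hn
    rw [CopAux.proj_coe hw ρ] at hm
    exact ⟨m, hm⟩
  · intro hhw
    obtain ⟨di, hdi⟩ := CopAux.canCatch_of_copsWin hhw
    apply CopAux.copsWin_of_canCatch (fun i => (↑(di i) : V))
    intro r
    obtain ⟨n, hn⟩ := hdi (CopAux.proj vl w hw r)
    exact CopAux.catch_HtoG hw hK1 hG hk n di _ hn r rfl
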